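/- Let N be a Poisson(λ) random variable with λ > 0 and let (Δ_i)_{i≥0} be i.i.d. real random variables independent of N satisfying P(|Δ_i| ≥ s) ≤ L^{−1} e^{−L s^γ} for all s ≥ 0, where L, γ > 0. Then for every real K > 1, every real M ≥ max(2λe, 1) and t := ((M K + 1) L^{−1} log K)^{1/γ}, one has P( {N ≥ M K} ∪ { max_{0 ≤ i ≤ N} |Δ_i| ≥ t } ) ≤ (1 + M/L) K^{−M K}. -/

import Mathlib

open MeasureTheory ProbabilityTheory

lemma aux_fact_shift (x : ℝ) (n : ℕ) :
    (((n+1 : ℕ)):ℝ) * (x^(n+1) / ((n+1).factorial : ℝ)) = x * (x^n / (n.factorial : ℝ)) := by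
  rw [Nat.factorial_succ]
  have h : ((n.factorial : ℝ)) ≠ 0 := by positivity
  push_cast
  field_simp
  ring

lemma aux_summable_shift (x : ℝ) :
    Summable (fun n : ℕ => (n:ℝ) * (x^n / (n.factorial : ℝ))) := by
  apply (summable_nat_add_iff 1).mp
  apply Summable.congr ((Real.summable_pow_div_factorial x).mul_left x)
  intro n
  exact (aux_fact_shift x n).symm

lemma aux_summable (x : ℝ) :
    Summable (fun n : ℕ => ((n:ℝ)+1) * (x^n / (n.factorial : ℝ))) := by
  apply Summable.congr ((Real.summable_pow_div_factorial x).add (aux_summable_shift x))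
  intro n; ring

lemma aux_sum_le (x : ℝ) (hx : 0 ≤ x) :
    ∑' n : ℕ, ((n:ℝ)+1) * (x^n / (n.factorial : ℝ)) ≤ (1+x) * Real.exp x := by
  have hs1 := Real.summable_pow_div_factorial x
  have hg := aux_summable_shift x
  have hS1 : ∑' n : ℕ, x^n / (n.factorial : ℝ) ≤ Real.exp x :=
    Summable.tsum_le_of_sum_range_le hs1 (fun n => Real.sum_le_exp_of_nonneg hx n)
  have hS1nonneg : 0 ≤ ∑' n : ℕ, x^n / (n.factorial : ℝ) :=
    tsum_nonneg (fun n => by positivity)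
  have hgsum : ∑' n : ℕ, (n:ℝ) * (x^n / (n.factorial : ℝ))
      = x * ∑' n : ℕ, x^n / (n.factorial : ℝ) := by
    rw [Summable.tsum_eq_zero_add hg]
    simp only [Nat.cast_zero, zero_mul, zero_add]
    calc ∑' n : ℕ, ((n+1:ℕ):ℝ) * (x^(n+1) / ((n+1).factorial : ℝ))
        = ∑' n : ℕ, x * (x^n / (n.factorial : ℝ)) :=
          tsum_congr (fun n => aux_fact_shift x n)
      _ = x * ∑' n : ℕ, x^n / (n.factorial : ℝ) := tsum_mul_left
  have hsplit : ∑' n : ℕ, ((n:ℝ)+1) * (x^n / (n.factorial : ℝ))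
      = (∑' n : ℕ, x^n / (n.factorial : ℝ)) + ∑' n : ℕ, (n:ℝ) * (x^n / (n.factorial : ℝ)) := by
    rw [← Summable.tsum_add hs1 hg]
    exact tsum_congr (fun n => by ring)
  rw [hsplit, hgsum]
  nlinarith [hS1, hS1nonneg]

lemma aux_pow_ceil_le (lr K M : ℝ) (hl : 0 < lr) (hK : 1 < K) (hM1 : 1 ≤ M)
    (hMe : 2 * lr * Real.exp 1 ≤ M) :
    lr ^ (⌈M*K⌉₊) / ((⌈M*K⌉₊).factorial : ℝ) ≤ K ^ (-(M*K)) := by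
  set n₀ := ⌈M*K⌉₊ with hn₀def
  have hK0 : (0:ℝ) < K := lt_trans one_pos hK
  have hMK1 : (1:ℝ) ≤ M*K := one_le_mul_of_one_le_of_one_le hM1 hK.le
  have hn₀MK : M*K ≤ (n₀:ℝ) := Nat.le_ceil _
  have hn₀pos : (0:ℝ) < (n₀:ℝ) := lt_of_lt_of_le (by linarith) hn₀MK
  have he1 : (0:ℝ) < Real.exp 1 := Real.exp_pos 1
  have hfac : ((n₀:ℝ))^n₀ ≤ Real.exp (n₀:ℝ) * ((n₀).factorial : ℝ) := by
    have h := Real.sum_le_exp_of_nonneg hn₀pos.le (n₀+1)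
    have hterm : ((n₀:ℝ))^n₀ / ((n₀).factorial : ℝ)
        ≤ ∑ i ∈ Finset.range (n₀+1), ((n₀:ℝ))^i / (i.factorial : ℝ) := by
      exact Finset.single_le_sum (f := fun i => ((n₀:ℝ))^i / (i.factorial : ℝ))
        (fun i _ => by positivity) (Finset.self_mem_range_succ n₀)
    have hfn : (0:ℝ) < ((n₀).factorial : ℝ) := by positivity
    rw [div_le_iff₀ hfn] at hterm
    calc ((n₀:ℝ))^n₀ ≤ (∑ i ∈ Finset.range (n₀+1), ((n₀:ℝ))^i / (i.factorial : ℝ)) * ((n₀).factorial : ℝ) := hterm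
      _ ≤ Real.exp (n₀:ℝ) * ((n₀).factorial : ℝ) := by
          apply mul_le_mul_of_nonneg_right h hfn.le
  have h2 : lr ^ n₀ / ((n₀).factorial : ℝ) ≤ (Real.exp 1 * lr / (n₀:ℝ))^n₀ := by
    rw [div_pow, mul_pow, Real.exp_one_pow]
    rw [div_le_div_iff₀ (by positivity) (by positivity)]
    nlinarith [hfac, pow_nonneg hl.le n₀]
  have h3 : Real.exp 1 * lr / (n₀:ℝ) ≤ (2*K)⁻¹ := by
    have h2K : (0:ℝ) < 2*K := by linarith
    rw [inv_eq_one_div, div_le_div_iff₀ hn₀pos h2K]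
    nlinarith [hn₀MK, hK0, hMe]
  have h4 : (Real.exp 1 * lr / (n₀:ℝ))^n₀ ≤ ((2*K)⁻¹)^n₀ := by
    apply pow_le_pow_left₀ (by positivity) h3
  have h5 : ((2*K)⁻¹)^n₀ = (2*K) ^ (-(n₀:ℝ)) := by
    rw [Real.rpow_neg (by positivity), Real.rpow_natCast, inv_pow]
  have h6 : (2*K) ^ (-(n₀:ℝ)) ≤ (2*K) ^ (-(M*K)) := by
    apply Real.rpow_le_rpow_of_exponent_le (by linarith) (by linarith)
  have h7 : (2*K) ^ (-(M*K)) ≤ K ^ (-(M*K)) := by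
    rw [Real.mul_rpow (by norm_num) hK0.le]
    have h8 : (2:ℝ) ^ (-(M*K)) ≤ 1 :=
      Real.rpow_le_one_of_one_le_of_nonpos (by norm_num) (by linarith)
    nlinarith [Real.rpow_nonneg hK0.le (-(M*K)), Real.rpow_nonneg (by norm_num : (0:ℝ) ≤ 2) (-(M*K))]
  calc lr ^ n₀ / ((n₀).factorial : ℝ) ≤ (Real.exp 1 * lr / (n₀:ℝ))^n₀ := h2
    _ ≤ ((2*K)⁻¹)^n₀ := h4
    _ = (2*K) ^ (-(n₀:ℝ)) := h5
    _ ≤ (2*K) ^ (-(M*K)) := h6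
    _ ≤ K ^ (-(M*K)) := h7

/-- If `N ~ Poisson(λ)` with `λ > 0` and `(Δ_i)_{i ≥ 0}` are i.i.d. real random variables,
independent of `N`, with tails `P(|Δ_i| ≥ s) ≤ L⁻¹ e^{-L s^γ}` for all `s ≥ 0`, then for every
real `K > 1`, every real `M ≥ max(2λe, 1)` and `t := ((M K + 1) L⁻¹ log K)^{1/γ}`,
`P({N ≥ M K} ∪ {max_{0 ≤ i ≤ N} |Δ_i| ≥ t}) ≤ (1 + M/L) K^{-M K}`. -/
theorem poisson_jump_tail_bound {Ω : Type*} [MeasurableSpace Ω] (P : Measure Ω)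
    [IsProbabilityMeasure P] (lam : NNReal) (hlam : 0 < lam) (N : Ω → ℕ)
    (hNmeas : Measurable N) (hpois : Measure.map N P = poissonMeasure lam)
    (Δ : ℕ → Ω → ℝ) (hΔmeas : ∀ i, Measurable (Δ i))
    (hiid : iIndepFun Δ P)
    (hident : ∀ i, Measure.map (Δ i) P = Measure.map (Δ 0) P)
    (hindepN : IndepFun N (fun ω => fun i => Δ i ω) P)
    (L γ : ℝ) (hL : 0 < L) (hγ : 0 < γ)
    (htail : ∀ i, ∀ s : ℝ, 0 ≤ s →
      P {ω | s ≤ |Δ i ω|} ≤ ENNReal.ofReal (L⁻¹ * Real.exp (-L * s ^ γ)))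
    (K M : ℝ) (hK : 1 < K) (hM : max (2 * lam * Real.exp 1) 1 ≤ M) :
    P ({ω | M * K ≤ (N ω : ℝ)} ∪
        {ω | ((M * K + 1) * L⁻¹ * Real.log K) ^ γ⁻¹ ≤
          (Finset.range (N ω + 1)).sup'
            (Finset.nonempty_range_iff.mpr (Nat.succ_ne_zero _)) (fun i => |Δ i ω|)})
      ≤ ENNReal.ofReal ((1 + M / L) * K ^ (-(M * K))) := by
  have hK0 : (0:ℝ) < K := lt_trans one_pos hK
  have hM1 : (1:ℝ) ≤ M := le_trans (le_max_right _ _) hM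
  have hMe : 2 * (lam:ℝ) * Real.exp 1 ≤ M := le_trans (le_max_left _ _) hM
  have hlam0 : (0:ℝ) < (lam:ℝ) := by exact_mod_cast hlam
  have hMK1 : (1:ℝ) ≤ M*K := one_le_mul_of_one_le_of_one_le hM1 hK.le
  have hlogK : 0 < Real.log K := Real.log_pos hK
  have hLne : L ≠ 0 := ne_of_gt hL
  -- L ≤ 1
  have hL1 : L ≤ 1 := by
    have h0 : P {ω | (0:ℝ) ≤ |Δ 0 ω|} = 1 := by
      have huniv : {ω | (0:ℝ) ≤ |Δ 0 ω|} = Set.univ := by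
        ext ω; simp [abs_nonneg]
      rw [huniv, measure_univ]
    have h := htail 0 0 le_rfl
    rw [h0, Real.zero_rpow hγ.ne', mul_zero, Real.exp_zero, mul_one] at h
    have h1 : (1:ℝ) ≤ L⁻¹ := ENNReal.one_le_ofReal.mp h
    have := mul_le_mul_of_nonneg_left h1 hL.le
    rwa [mul_one, mul_inv_cancel₀ hLne] at this
  by_cases hcase : (lam:ℝ) + 1 ≤ M * K
  case neg =>
    -- trivial case : the RHS is at least 1
    push_neg at hcase
    have hMMK : M ≤ M*K := le_mul_of_one_le_right (by linarith) hK.le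
    have he : (2.7182818283:ℝ) < Real.exp 1 := Real.exp_one_gt_d9
    have hlam4 : (lam:ℝ) < 1/4 := by
      nlinarith [mul_le_mul_of_nonneg_left he.le (by positivity : (0:ℝ) ≤ 2*(lam:ℝ))]
    have hlogle : Real.log K ≤ K - 1 := Real.log_le_sub_one_of_pos hK0
    have hKle : K ≤ M*K := le_mul_of_one_le_left hK0.le hM1
    have hlogK0 : 0 ≤ Real.log K := hlogK.le
    have hprod : M*K * Real.log K < Real.log 2 := by
      have hlog2 : (0.6931471803:ℝ) < Real.log 2 := Real.log_two_gt_d9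
      have h1 : M*K*Real.log K ≤ M*K*(K-1) :=
        mul_le_mul_of_nonneg_left hlogle (by linarith)
      have h2 : K - 1 < 1/4 := by linarith
      have h3 : M*K < 5/4 := by linarith
      nlinarith [h1, h2, h3]
    have hK2 : K ^ (M*K) ≤ 2 := by
      rw [Real.rpow_def_of_pos hK0]
      calc Real.exp (Real.log K * (M*K)) ≤ Real.exp (Real.log 2) := by
            apply Real.exp_le_exp.mpr; nlinarith
        _ = 2 := Real.exp_log two_pos
    have hrpos : 0 < K ^ (M*K) := Real.rpow_pos_of_pos hK0 _
    have hr1 : (1:ℝ) ≤ (1 + M/L) * K ^ (-(M*K)) := by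
      rw [Real.rpow_neg hK0.le]
      have hML : (1:ℝ) ≤ M / L := (one_le_div hL).mpr (hL1.trans hM1)
      calc (1:ℝ) = 2 * 2⁻¹ := by norm_num
        _ ≤ (1+M/L) * (K^(M*K))⁻¹ := by
            apply mul_le_mul (by linarith) ?_ (by norm_num) (by linarith)
            exact inv_anti₀ hrpos hK2
    calc P _ ≤ 1 := prob_le_one
      _ ≤ ENNReal.ofReal ((1+M/L) * K^(-(M*K))) := ENNReal.one_le_ofReal.mpr hr1
  case pos =>
    -- main case
    have hxpos : 0 ≤ (M*K+1) * L⁻¹ * Real.log K := by positivity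
    set t : ℝ := ((M*K+1) * L⁻¹ * Real.log K) ^ γ⁻¹ with ht
    have ht0 : 0 ≤ t := Real.rpow_nonneg hxpos _
    set qr : ℝ := L⁻¹ * K ^ (-(M*K+1)) with hqrdef
    have hqr0 : 0 ≤ qr := by positivity
    have htq : ∀ i, P {ω | t ≤ |Δ i ω|} ≤ ENNReal.ofReal qr := by
      intro i
      refine (htail i t ht0).trans (le_of_eq ?_)
      congr 1
      rw [ht, Real.rpow_inv_rpow hxpos hγ.ne']
      rw [hqrdef, Real.rpow_def_of_pos hK0]
      congr 1
      field_simp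
    -- the pmf of N
    have hpmfN : ∀ n : ℕ, P (N ⁻¹' {n}) = (poissonPMF lam) n := by
      intro n
      rw [← Measure.map_apply hNmeas (MeasurableSet.singleton n), hpois]
      rw [poissonMeasure_singleton]; rfl
    have hpmfapp : ∀ n : ℕ, (poissonPMF lam) n = ENNReal.ofReal (poissonPMFReal lam n) :=
      fun n => rfl
    -- bound on P(A)
    set n₀ := ⌈M*K⌉₊ with hn₀def
    have hPA : P {ω | M*K ≤ ((N ω : ℕ) : ℝ)} ≤ ENNReal.ofReal (K ^ (-(M*K))) := by
      have hAeq : {ω | M*K ≤ ((N ω : ℕ) : ℝ)} = N ⁻¹' {n : ℕ | n₀ ≤ n} := by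
        ext ω
        simp only [Set.mem_setOf_eq, Set.mem_preimage, hn₀def]
        exact (Nat.ceil_le).symm
      rw [hAeq, ← Measure.map_apply hNmeas MeasurableSet.of_discrete, hpois]
      have happ : poissonMeasure lam {n : ℕ | n₀ ≤ n}
          = ∑' k : ℕ, (poissonPMF lam) (k + n₀) := by
        have hpm : ∀ x : ℕ, poissonMeasure lam {x} = poissonPMF lam x := by
          intro x; rw [poissonMeasure_singleton]; rfl
        rw [← Measure.tsum_indicator_apply_singleton _ _ MeasurableSet.of_discrete]
        simp_rw [hpm]
        rw [← Function.Injective.tsum_eq (g := fun k : ℕ => k + n₀) (add_left_injective n₀) ?_]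
        · apply tsum_congr; intro k
          rw [Set.indicator_of_mem]
          exact Nat.le_add_left n₀ k
        · intro m hm
          have hmem : m ∈ {n : ℕ | n₀ ≤ n} := by
            by_contra hc
            exact hm (Set.indicator_of_notMem hc _)
          exact ⟨m - n₀, Nat.sub_add_cancel hmem⟩
      rw [happ]
      have hstep : ∀ k : ℕ, (poissonPMF lam) (k + n₀) ≤ ENNReal.ofReal
          (((lam:ℝ)^n₀ / (n₀.factorial : ℝ) * Real.exp (-(lam:ℝ))) * ((lam:ℝ)^k / (k.factorial : ℝ))) := by
        intro k
        rw [hpmfapp]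
        apply ENNReal.ofReal_le_ofReal
        unfold poissonPMFReal
        have hfact : ((n₀.factorial : ℝ)) * (k.factorial : ℝ) ≤ ((k+n₀).factorial : ℝ) := by
          exact_mod_cast Nat.le_of_dvd (k+n₀).factorial_pos
            (mul_comm (n₀.factorial) (k.factorial) ▸
              Nat.factorial_mul_factorial_dvd_factorial_add k n₀)
        rw [pow_add]
        rw [show (lam:ℝ)^n₀ / (n₀.factorial : ℝ) * Real.exp (-(lam:ℝ)) * ((lam:ℝ)^k / (k.factorial : ℝ))
            = Real.exp (-(lam:ℝ)) * ((lam:ℝ)^k * (lam:ℝ)^n₀) / ((n₀.factorial : ℝ) * (k.factorial : ℝ)) by ring]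
        gcongr
      calc ∑' k : ℕ, (poissonPMF lam) (k + n₀)
          ≤ ∑' k : ℕ, ENNReal.ofReal
            (((lam:ℝ)^n₀ / (n₀.factorial : ℝ) * Real.exp (-(lam:ℝ))) * ((lam:ℝ)^k / (k.factorial : ℝ))) :=
            ENNReal.tsum_le_tsum hstep
        _ = ENNReal.ofReal (∑' k : ℕ,
            (((lam:ℝ)^n₀ / (n₀.factorial : ℝ) * Real.exp (-(lam:ℝ))) * ((lam:ℝ)^k / (k.factorial : ℝ)))) :=
            (ENNReal.ofReal_tsum_of_nonneg (fun k => by positivity)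
              ((Real.summable_pow_div_factorial (lam:ℝ)).mul_left _)).symm
        _ ≤ ENNReal.ofReal (K ^ (-(M*K))) := by
            apply ENNReal.ofReal_le_ofReal
            rw [tsum_mul_left]
            have hsum := Summable.tsum_le_of_sum_range_le (Real.summable_pow_div_factorial (lam:ℝ))
              (fun n => Real.sum_le_exp_of_nonneg hlam0.le n)
            have hc0 : 0 ≤ (lam:ℝ)^n₀ / (n₀.factorial : ℝ) * Real.exp (-(lam:ℝ)) := by positivity
            calc (lam:ℝ)^n₀ / (n₀.factorial : ℝ) * Real.exp (-(lam:ℝ))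
                  * (∑' k : ℕ, (lam:ℝ)^k / (k.factorial : ℝ))
                ≤ (lam:ℝ)^n₀ / (n₀.factorial : ℝ) * Real.exp (-(lam:ℝ)) * Real.exp (lam:ℝ) :=
                  mul_le_mul_of_nonneg_left hsum hc0
              _ = (lam:ℝ)^n₀ / (n₀.factorial : ℝ) := by
                  rw [mul_assoc, ← Real.exp_add]; simp
              _ ≤ K ^ (-(M*K)) := aux_pow_ceil_le (lam:ℝ) K M hlam0 hK hM1 hMe
    -- bound on P(B)
    set D : Ω → (ℕ → ℝ) := fun ω i => Δ i ω with hD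
    set S : ℕ → Set (ℕ → ℝ) := fun n => ⋃ i ∈ Finset.range (n+1), {f : ℕ → ℝ | t ≤ |f i|} with hS
    have hSmeas : ∀ n, MeasurableSet (S n) := by
      intro n
      apply MeasurableSet.biUnion (Finset.range (n+1)).countable_toSet
      intro i _
      exact measurableSet_le measurable_const ((measurable_pi_apply i).abs)
    have hBsub : {ω | t ≤ (Finset.range (N ω + 1)).sup'
        (Finset.nonempty_range_iff.mpr (Nat.succ_ne_zero _)) (fun i => |Δ i ω|)}
        ⊆ ⋃ n : ℕ, (N ⁻¹' {n} ∩ D ⁻¹' (S n)) := by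
      intro ω hω
      simp only [Set.mem_setOf_eq] at hω
      obtain ⟨i, hi, hti⟩ := (Finset.le_sup'_iff _).mp hω
      refine Set.mem_iUnion.mpr ⟨N ω, ⟨rfl, ?_⟩⟩
      simp only [hS, Set.mem_preimage, Set.mem_iUnion]
      exact ⟨i, hi, hti⟩
    have hDpre : ∀ n : ℕ, D ⁻¹' (S n) = ⋃ i ∈ Finset.range (n+1), {ω | t ≤ |Δ i ω|} := by
      intro n
      ext ω
      simp [hS, hD]
    have hPDS : ∀ n : ℕ, P (D ⁻¹' (S n)) ≤ ((n:ENNReal)+1) * ENNReal.ofReal qr := by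
      intro n
      rw [hDpre n]
      refine (measure_biUnion_finset_le _ _).trans ?_
      calc ∑ i ∈ Finset.range (n+1), P {ω | t ≤ |Δ i ω|}
          ≤ ∑ _i ∈ Finset.range (n+1), ENNReal.ofReal qr :=
            Finset.sum_le_sum (fun i _ => htq i)
        _ = ((n:ENNReal)+1) * ENNReal.ofReal qr := by
            rw [Finset.sum_const, Finset.card_range, nsmul_eq_mul]
            push_cast
            ring
    have hPB : P (⋃ n : ℕ, (N ⁻¹' {n} ∩ D ⁻¹' (S n)))
        ≤ ENNReal.ofReal ((M/L) * K ^ (-(M*K))) := by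
      refine le_trans (measure_iUnion_le _) ?_
      have hterm : ∀ n : ℕ, P (N ⁻¹' {n} ∩ D ⁻¹' (S n)) ≤ ENNReal.ofReal
          ((Real.exp (-(lam:ℝ)) * qr) * (((n:ℝ)+1) * ((lam:ℝ)^n / (n.factorial : ℝ)))) := by
        intro n
        rw [hindepN.measure_inter_preimage_eq_mul {n} (S n) MeasurableSet.of_discrete (hSmeas n)]
        calc P (N ⁻¹' {n}) * P ((fun ω i => Δ i ω) ⁻¹' (S n))
            ≤ (poissonPMF lam) n * (((n:ENNReal)+1) * ENNReal.ofReal qr) := by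
              rw [← hpmfN n]
              exact mul_le_mul_right (hPDS n) _
          _ = ENNReal.ofReal ((Real.exp (-(lam:ℝ)) * qr) * (((n:ℝ)+1) * ((lam:ℝ)^n / (n.factorial : ℝ)))) := by
              rw [hpmfapp n]
              rw [show ((n:ENNReal)+1) = ENNReal.ofReal ((n:ℝ)+1) by
                rw [ENNReal.ofReal_add (by positivity) zero_le_one]
                simp [ENNReal.ofReal_natCast]]
              rw [← ENNReal.ofReal_mul (by positivity), ← ENNReal.ofReal_mul poissonPMFReal_nonneg]
              congr 1
              unfold poissonPMFReal
              ring
      refine le_trans (ENNReal.tsum_le_tsum hterm) ?_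
      rw [← ENNReal.ofReal_tsum_of_nonneg (fun n => by positivity)
        ((aux_summable (lam:ℝ)).mul_left _)]
      apply ENNReal.ofReal_le_ofReal
      rw [tsum_mul_left]
      have hsum := aux_sum_le (lam:ℝ) hlam0.le
      have hc0 : 0 ≤ Real.exp (-(lam:ℝ)) * qr := by positivity
      calc Real.exp (-(lam:ℝ)) * qr * (∑' n : ℕ, ((n:ℝ)+1) * ((lam:ℝ)^n / (n.factorial : ℝ)))
          ≤ Real.exp (-(lam:ℝ)) * qr * ((1+(lam:ℝ)) * Real.exp (lam:ℝ)) :=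
            mul_le_mul_of_nonneg_left hsum hc0
        _ = qr * (1+(lam:ℝ)) := by
            rw [show Real.exp (-(lam:ℝ)) * qr * ((1+(lam:ℝ)) * Real.exp (lam:ℝ))
              = (Real.exp (-(lam:ℝ)) * Real.exp ((lam:ℝ))) * (qr * (1+(lam:ℝ))) by ring,
              ← Real.exp_add]
            simp
        _ ≤ (M/L) * K ^ (-(M*K)) := by
            rw [hqrdef]
            have hKsplit : K ^ (-(M*K+1)) = K ^ (-(M*K)) * K⁻¹ := by
              rw [show -(M*K+1) = -(M*K) + (-1) by ring, Real.rpow_add hK0, Real.rpow_neg_one]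
            rw [hKsplit]
            have hstep2 : L⁻¹ * (K ^ (-(M*K)) * K⁻¹) * (1+(lam:ℝ))
                ≤ L⁻¹ * (K ^ (-(M*K)) * K⁻¹) * (M*K) := by
              have hpos : 0 ≤ L⁻¹ * (K ^ (-(M*K)) * K⁻¹) := by positivity
              apply mul_le_mul_of_nonneg_left _ hpos
              linarith
            refine hstep2.trans (le_of_eq ?_)
            field_simp
    -- combine
    refine le_trans (measure_union_le _ _) ?_
    refine le_trans (add_le_add hPA (le_trans (measure_mono hBsub) hPB)) ?_
    rw [← ENNReal.ofReal_add (by positivity) (by positivity)]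
    apply ENNReal.ofReal_le_ofReal
    apply le_of_eq
    ring
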